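/- Let · be a partial action of the Hopf algebra A on R, let g ∈ A be a grouplike element with g·1_R = 0, and let τ : A → A be an algebra automorphism satisfying Δ(τ(a)) = Σ τ(a₁) ⊗ a₂ and Δ(τ(a)) = Σ g⁻¹a₁g ⊗ τ(a₂) for all a ∈ A (τ plays the role of σ⁻¹ for a Hopf–Ore extension A[x,σ]). Let w ∈ Z(R) satisfy a·w = (τ(a)·1_R)·w for all a ∈ A. Then: (i) a·w^j = (τ^j(a)·1_R)·w^j for all a ∈ A, j ∈ ℕ₀; (ii) if moreover (ga)·r = (ag)·r for all a ∈ A, r ∈ R, then Σ (a₁·w^j)·((a₂ g^k b)·r) = Σ (a₁·1_R)·((g^k τ^j(a₂) b)·r)·w^j for all a, b ∈ A, r ∈ R, j ∈ ℕ₀ and k ∈ ℤ; (iii) if moreover (ga)·r = (ag)·r for all a ∈ A, r ∈ R, and the partial action is symmetric, then Σ ((a₁ g^k b)·r)·(a₂·w^j) = Σ ((g^k τ^j(a₁) b)·r)·(a₂·1_R)·w^j for all a, b ∈ A, r ∈ R, j ∈ ℕ₀ and k ∈ ℤ. -/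

import Mathlib

open TensorProduct

noncomputable section

/-- Gaussian ($q$-)binomial coefficients, defined by the recursion
`binom(0,0)_q = 1`, `binom(n,m)_q = 0` for `m > n`,
`binom(n,m)_q = binom(n-1,m)_q + q^(n-m) * binom(n-1,m-1)_q`. -/
def qbinom {K : Type*} [CommRing K] (q : K) : ℕ → ℕ → K
  | 0, 0 => 1
  | 0, _ + 1 => 0
  | n + 1, 0 => qbinom q n 0
  | n + 1, m + 1 => qbinom q n (m + 1) + q ^ (n - m) * qbinom q n m

/-- A (left) partial action of a bialgebra `H` on an algebra `R`:
(PA.1) `1 · r = r`; (PA.2) `h · (r*s) = Σ (h₁ · r)(h₂ · s)`;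
(PA.3) `h · (m · r) = Σ (h₁ · 1)(h₂m · r)`. -/
structure PartialAction (k H R : Type*) [CommSemiring k] [Semiring H] [Bialgebra k H]
    [Semiring R] [Algebra k R] where
  act : H →ₗ[k] R →ₗ[k] R
  unit_act : ∀ r : R, act 1 r = r
  mul_act : ∀ (h : H) (r s : R),
    act h (r * s) = TensorProduct.lift
      ((LinearMap.mul k R).compl₁₂ (act.flip r) (act.flip s)) (Coalgebra.comul (R := k) h)
  act_act : ∀ (h m : H) (r : R),
    act h (act m r) = TensorProduct.lift
      ((LinearMap.mul k R).compl₁₂ (act.flip 1)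
        ((act.flip r).comp (LinearMap.mulRight k m))) (Coalgebra.comul (R := k) h)

/-- Symmetry (PA.S): `h · (m · r) = Σ (h₁m · r)(h₂ · 1)`. -/
def PartialAction.IsSymmetric {k H R : Type*} [CommSemiring k] [Semiring H] [Bialgebra k H]
    [Semiring R] [Algebra k R] (P : PartialAction k H R) : Prop :=
  ∀ (h m : H) (r : R),
    P.act h (P.act m r) = TensorProduct.lift
      ((LinearMap.mul k R).compl₁₂ ((P.act.flip r).comp (LinearMap.mulRight k m))
        (P.act.flip 1)) (Coalgebra.comul (R := k) h)

/-- A grouplike element: `Δ g = g ⊗ g` and `ε g = 1`. -/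
def IsGrouplike (k : Type*) {H : Type*} [CommSemiring k] [Semiring H] [Bialgebra k H]
    (g : H) : Prop :=
  Coalgebra.comul (R := k) g = g ⊗ₜ[k] g ∧ Coalgebra.counit (R := k) g = 1

/-- A `(1,g)`-primitive element: `Δ x = x ⊗ 1 + g ⊗ x`. -/
def IsOneGPrimitive (k : Type*) {H : Type*} [CommSemiring k] [Semiring H] [Bialgebra k H]
    (g x : H) : Prop :=
  Coalgebra.comul (R := k) x = x ⊗ₜ[k] (1 : H) + g ⊗ₜ[k] x

end

section Aux14
variable {k A R : Type*} [CommSemiring k] [Semiring A] [Bialgebra k A] [Semiring R] [Algebra k R]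

/-- `pairF f₁ f₂ a = Σ f₁(a₁) * f₂(a₂)`. -/
noncomputable def pairF (f₁ f₂ : A →ₗ[k] R) (a : A) : R :=
  TensorProduct.lift ((LinearMap.mul k R).compl₁₂ f₁ f₂) (Coalgebra.comul (R := k) a)

lemma pairF_def (f₁ f₂ : A →ₗ[k] R) (a : A) :
    TensorProduct.lift ((LinearMap.mul k R).compl₁₂ f₁ f₂) (Coalgebra.comul (R := k) a)
      = pairF f₁ f₂ a := rfl

lemma lift_map_eq (f₁ f₂ : A →ₗ[k] R) (φ ψ : A →ₗ[k] A) (x : A ⊗[k] A) :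
    TensorProduct.lift ((LinearMap.mul k R).compl₁₂ f₁ f₂) (TensorProduct.map φ ψ x) =
    TensorProduct.lift ((LinearMap.mul k R).compl₁₂ (f₁ ∘ₗ φ) (f₂ ∘ₗ ψ)) x := by
  induction x using TensorProduct.induction_on with
  | zero => simp
  | tmul a b => simp [LinearMap.compl₁₂_apply]
  | add x y hx hy => simp [hx, hy]

lemma pairF_mulr_right (f₁ f₂ : A →ₗ[k] R) (c : R) (a : A) :
    pairF f₁ ((LinearMap.mulRight k c) ∘ₗ f₂) a = pairF f₁ f₂ a * c := by
  unfold pairF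
  induction Coalgebra.comul (R := k) a using TensorProduct.induction_on with
  | zero => simp
  | tmul a b => simp [LinearMap.compl₁₂_apply, mul_assoc]
  | add x y hx hy => simp [hx, hy, add_mul]

lemma pairF_mulr_left (f₁ f₂ : A →ₗ[k] R) (c : R) (hc : ∀ x : R, c * x = x * c) (a : A) :
    pairF ((LinearMap.mulRight k c) ∘ₗ f₁) f₂ a = pairF f₁ f₂ a * c := by
  unfold pairF
  induction Coalgebra.comul (R := k) a using TensorProduct.induction_on with
  | zero => simp
  | tmul a b =>
    simp only [TensorProduct.lift.tmul, LinearMap.compl₁₂_apply, LinearMap.comp_apply,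
      LinearMap.mulRight_apply, LinearMap.mul_apply']
    rw [mul_assoc, hc, ← mul_assoc]
  | add x y hx hy => simp [hx, hy, add_mul]
end Aux14

/-- Lemma 4.2: let `g` be an invertible grouplike with `g · 1_R = 0`, and
`τ` an algebra automorphism (playing the role of `σ⁻¹`) with `Δ(τ(a)) = Σ τ(a₁) ⊗ a₂` and
`Δ(τ(a)) = Σ g⁻¹a₁g ⊗ τ(a₂)`, and let `w ∈ Z(R)` satisfy `a · w = (τ(a) · 1_R) w`. Then
(i) `a · wʲ = (τʲ(a) · 1_R) wʲ`;
(ii) if `ga · r = ag · r` then `Σ (a₁·wʲ)((a₂gᵏb)·r) = Σ (a₁·1)((gᵏτʲ(a₂)b)·r) wʲ`;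
(iii) if moreover the action is symmetric then
`Σ ((a₁gᵏb)·r)(a₂·wʲ) = Σ ((gᵏτʲ(a₁)b)·r)(a₂·1) wʲ`. -/
theorem stmt14 {k A R : Type*} [Field k] [IsAlgClosed k] [CharZero k]
    [Ring A] [HopfAlgebra k A] [Ring R] [Algebra k R]
    (P : PartialAction k A R)
    (gu : Aˣ) (hg : IsGrouplike k (gu : A)) (hg0 : P.act (gu : A) 1 = 0)
    (τ : A ≃ₐ[k] A)
    (hτ1 : ∀ a : A, Coalgebra.comul (R := k) (τ a) =
      TensorProduct.map τ.toLinearMap LinearMap.id (Coalgebra.comul (R := k) a))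
    (hτ2 : ∀ a : A, Coalgebra.comul (R := k) (τ a) =
      TensorProduct.map
        ((LinearMap.mulLeft k ((gu⁻¹ : Aˣ) : A)).comp (LinearMap.mulRight k (gu : A)))
        τ.toLinearMap
        (Coalgebra.comul (R := k) a))
    (w : R) (hw : w ∈ Set.center R)
    (haw : ∀ a : A, P.act a w = P.act (τ a) 1 * w) :
    (∀ (a : A) (j : ℕ), P.act a (w ^ j) = P.act ((τ ^ j : A ≃ₐ[k] A) a) 1 * w ^ j) ∧
    ((∀ (a : A) (r : R), P.act ((gu : A) * a) r = P.act (a * (gu : A)) r) →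
      ∀ (a b : A) (r : R) (j : ℕ) (kz : ℤ),
        TensorProduct.lift ((LinearMap.mul k R).compl₁₂
            (P.act.flip (w ^ j))
            ((P.act.flip r).comp (LinearMap.mulRight k (((gu ^ kz : Aˣ) : A) * b))))
          (Coalgebra.comul (R := k) a) =
        TensorProduct.lift ((LinearMap.mul k R).compl₁₂
            (P.act.flip 1)
            ((LinearMap.mulRight k (w ^ j)).comp
              ((P.act.flip r).comp
                ((LinearMap.mulRight k b).comp
                  ((LinearMap.mulLeft k ((gu ^ kz : Aˣ) : A)).comp
                    (τ ^ j : A ≃ₐ[k] A).toLinearMap)))))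
          (Coalgebra.comul (R := k) a)) ∧
    ((∀ (a : A) (r : R), P.act ((gu : A) * a) r = P.act (a * (gu : A)) r) →
      P.IsSymmetric →
      ∀ (a b : A) (r : R) (j : ℕ) (kz : ℤ),
        TensorProduct.lift ((LinearMap.mul k R).compl₁₂
            ((P.act.flip r).comp (LinearMap.mulRight k (((gu ^ kz : Aˣ) : A) * b)))
            (P.act.flip (w ^ j)))
          (Coalgebra.comul (R := k) a) =
        TensorProduct.lift ((LinearMap.mul k R).compl₁₂
            ((P.act.flip r).comp
              ((LinearMap.mulRight k b).comp
                ((LinearMap.mulLeft k ((gu ^ kz : Aˣ) : A)).comp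
                  (τ ^ j : A ≃ₐ[k] A).toLinearMap)))
            ((LinearMap.mulRight k (w ^ j)).comp (P.act.flip 1)))
          (Coalgebra.comul (R := k) a)) := by
  have hw' : ∀ x : R, w * x = x * w := fun x => ((Set.mem_center_iff.mp hw).comm x)
  have hwj : ∀ (j : ℕ) (x : R), w ^ j * x = x * w ^ j := by
    intro j
    induction j with
    | zero => simp
    | succ j ih =>
      intro x
      rw [pow_succ, mul_assoc, hw', ← mul_assoc, ih, mul_assoc]
  have hpow : ∀ (j : ℕ) (c : A), (τ ^ (j + 1) : A ≃ₐ[k] A) c = (τ ^ j : A ≃ₐ[k] A) (τ c) := by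
    intro j c; rw [pow_succ]; rfl
  have hpow' : ∀ (j : ℕ) (c : A), (τ ^ (j + 1) : A ≃ₐ[k] A) c = τ ((τ ^ j : A ≃ₐ[k] A) c) := by
    intro j c; rw [pow_succ']; rfl
  have E1 : ∀ (f₁ f₂ : A →ₗ[k] R) (a : A),
      pairF f₁ f₂ (τ a) = pairF (f₁ ∘ₗ τ.toLinearMap) f₂ a := by
    intro f₁ f₂ a
    unfold pairF
    rw [hτ1 a, lift_map_eq, LinearMap.comp_id]
  have E2 : ∀ (f₁ f₂ : A →ₗ[k] R) (a : A),
      pairF f₁ f₂ (τ a) =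
        pairF (f₁ ∘ₗ ((LinearMap.mulLeft k ((gu⁻¹ : Aˣ) : A)).comp
            (LinearMap.mulRight k (gu : A)))) (f₂ ∘ₗ τ.toLinearMap) a := by
    intro f₁ f₂ a
    unfold pairF
    rw [hτ2 a, lift_map_eq]
  have E1j : ∀ (j : ℕ) (f₁ f₂ : A →ₗ[k] R) (a : A),
      pairF f₁ f₂ ((τ ^ j : A ≃ₐ[k] A) a)
        = pairF (f₁ ∘ₗ (τ ^ j : A ≃ₐ[k] A).toLinearMap) f₂ a := by
    intro j
    induction j with
    | zero =>
      intro f₁ f₂ a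
      have h0 : f₁ ∘ₗ (τ ^ 0 : A ≃ₐ[k] A).toLinearMap = f₁ := LinearMap.ext fun c => by simp
      rw [h0]; simp
    | succ j ih =>
      intro f₁ f₂ a
      rw [hpow j a, ih, E1]
      have hs : (f₁ ∘ₗ (τ ^ j : A ≃ₐ[k] A).toLinearMap) ∘ₗ τ.toLinearMap
          = f₁ ∘ₗ (τ ^ (j + 1) : A ≃ₐ[k] A).toLinearMap :=
        LinearMap.ext fun c => by simp [hpow j c]
      rw [hs]
  have actF : ∀ (h : A) (r : R), P.act h r = pairF (P.act.flip 1) (P.act.flip r) h := by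
    intro h r
    conv_lhs => rw [← P.unit_act r]
    rw [P.act_act h 1 r, pairF_def]
    congr 1
    exact LinearMap.ext fun c => by simp
  -- part (i)
  have claim1 : ∀ (j : ℕ) (c : A),
      P.act c (w ^ j) = P.act ((τ ^ j : A ≃ₐ[k] A) c) 1 * w ^ j := by
    intro j
    induction j with
    | zero => intro c; simp
    | succ j ih =>
      intro c
      have h1 : P.act.flip (w ^ j)
          = (LinearMap.mulRight k (w ^ j)) ∘ₗ
              ((P.act.flip 1) ∘ₗ (τ ^ j : A ≃ₐ[k] A).toLinearMap) :=
        LinearMap.ext fun d => by simp [ih d]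
      calc P.act c (w ^ (j + 1)) = P.act c (w ^ j * w) := by rw [pow_succ]
        _ = pairF (P.act.flip (w ^ j)) (P.act.flip w) c := by
              rw [P.mul_act c _ _, pairF_def]
        _ = pairF ((P.act.flip 1) ∘ₗ (τ ^ j : A ≃ₐ[k] A).toLinearMap) (P.act.flip w) c
              * w ^ j := by rw [h1, pairF_mulr_left _ _ _ (hwj j)]
        _ = pairF (P.act.flip 1) (P.act.flip w) ((τ ^ j : A ≃ₐ[k] A) c) * w ^ j := by
              rw [E1j j]
        _ = P.act ((τ ^ j : A ≃ₐ[k] A) c) w * w ^ j := by rw [← actF]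
        _ = (P.act (τ ((τ ^ j : A ≃ₐ[k] A) c)) 1 * w) * w ^ j := by rw [haw]
        _ = P.act ((τ ^ (j + 1) : A ≃ₐ[k] A) c) 1 * w ^ (j + 1) := by
              rw [← hpow' j c, mul_assoc, ← pow_succ']
  have flipwj : ∀ j : ℕ, P.act.flip (w ^ j)
      = (LinearMap.mulRight k (w ^ j)) ∘ₗ
          ((P.act.flip 1) ∘ₗ (τ ^ j : A ≃ₐ[k] A).toLinearMap) :=
    fun j => LinearMap.ext fun d => by simp [claim1 j d]
  refine ⟨fun a j => claim1 j a, ?_, ?_⟩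
  · -- part (ii)
    intro hcomm a b r j kz
    have hggi : (gu : A) * ((gu⁻¹ : Aˣ) : A) = 1 := Units.mul_inv gu
    have hgig : ((gu⁻¹ : Aˣ) : A) * (gu : A) = 1 := Units.inv_mul gu
    have hconj : ∀ (x : A) (r' : R),
        P.act (((gu⁻¹ : Aˣ) : A) * x * (gu : A)) r' = P.act x r' := by
      intro x r'
      have h := hcomm (((gu⁻¹ : Aˣ) : A) * x) r'
      rw [← mul_assoc, hggi, one_mul] at h
      exact h.symm
    have hgi : ∀ (x : A) (r' : R),
        P.act (((gu⁻¹ : Aˣ) : A) * x) r' = P.act (x * ((gu⁻¹ : Aˣ) : A)) r' := by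
      intro x r'
      have h := hcomm (((gu⁻¹ : Aˣ) : A) * x * ((gu⁻¹ : Aˣ) : A)) r'
      rw [show (gu : A) * (((gu⁻¹ : Aˣ) : A) * x * ((gu⁻¹ : Aˣ) : A))
            = x * ((gu⁻¹ : Aˣ) : A) by rw [← mul_assoc, ← mul_assoc, hggi, one_mul],
          show ((gu⁻¹ : Aˣ) : A) * x * ((gu⁻¹ : Aˣ) : A) * (gu : A)
            = ((gu⁻¹ : Aˣ) : A) * x by rw [mul_assoc, hgig, mul_one]] at h
      exact h.symm
    have hzall : ∀ (m : ℤ) (x : A) (r' : R),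
        P.act (((gu ^ m : Aˣ) : A) * x) r' = P.act (x * ((gu ^ m : Aˣ) : A)) r' := by
      intro m
      induction m using Int.induction_on with
      | zero => intro x r'; simp
      | succ n ih =>
        intro x r'
        have hz1 : ((gu ^ ((n : ℤ) + 1) : Aˣ) : A)
            = ((gu ^ (n : ℤ) : Aˣ) : A) * (gu : A) := by
          rw [zpow_add_one]; rfl
        rw [hz1, mul_assoc, ih ((gu : A) * x) r', mul_assoc, hcomm (x * ((gu ^ (n:ℤ) : Aˣ) : A)) r',
          mul_assoc]
      | pred n ih =>
        intro x r'
        have hz1 : ((gu ^ (-(n : ℤ) - 1) : Aˣ) : A)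
            = ((gu ^ (-(n : ℤ)) : Aˣ) : A) * ((gu⁻¹ : Aˣ) : A) := by
          rw [zpow_sub_one]; rfl
        rw [hz1, mul_assoc, ih (((gu⁻¹ : Aˣ) : A) * x) r', mul_assoc,
          hgi (x * ((gu ^ (-(n:ℤ)) : Aˣ) : A)) r', mul_assoc]
    have Q : ∀ (j : ℕ) (a b : A) (r : R),
        pairF ((P.act.flip 1) ∘ₗ (τ ^ j : A ≃ₐ[k] A).toLinearMap)
            ((P.act.flip r).comp (LinearMap.mulRight k (((gu ^ kz : Aˣ) : A) * b))) a
          = pairF (P.act.flip 1)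
            ((P.act.flip r).comp
              ((LinearMap.mulRight k b).comp
                ((LinearMap.mulLeft k ((gu ^ kz : Aˣ) : A)).comp
                  (τ ^ j : A ≃ₐ[k] A).toLinearMap))) a := by
      intro j
      induction j with
      | zero =>
        intro a b r
        have s1 : (P.act.flip 1) ∘ₗ (τ ^ 0 : A ≃ₐ[k] A).toLinearMap = P.act.flip 1 :=
          LinearMap.ext fun c => by simp
        have s2 : (P.act.flip r).comp
              ((LinearMap.mulRight k b).comp
                ((LinearMap.mulLeft k ((gu ^ kz : Aˣ) : A)).comp
                  (τ ^ 0 : A ≃ₐ[k] A).toLinearMap))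
            = (P.act.flip r).comp (LinearMap.mulRight k (b * ((gu ^ kz : Aˣ) : A))) :=
          LinearMap.ext fun c => by
            have h0 : (τ ^ 0 : A ≃ₐ[k] A).toLinearMap c = c := by
              rw [pow_zero]; rfl
            simp only [LinearMap.comp_apply, LinearMap.mulLeft_apply, LinearMap.mulRight_apply,
              LinearMap.flip_apply, h0]
            rw [mul_assoc, hzall kz (c * b), ← mul_assoc, mul_assoc]
        have t1 : pairF (P.act.flip 1)
              ((P.act.flip r).comp (LinearMap.mulRight k (((gu ^ kz : Aˣ) : A) * b))) a
            = P.act a (P.act (((gu ^ kz : Aˣ) : A) * b) r) :=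
          (P.act_act a (((gu ^ kz : Aˣ) : A) * b) r).symm
        have t2 : pairF (P.act.flip 1)
              ((P.act.flip r).comp (LinearMap.mulRight k (b * ((gu ^ kz : Aˣ) : A)))) a
            = P.act a (P.act (b * ((gu ^ kz : Aˣ) : A)) r) :=
          (P.act_act a (b * ((gu ^ kz : Aˣ) : A)) r).symm
        rw [s1, s2, t1, t2, hzall kz b r]
      | succ j ih =>
        intro a b r
        have s3 : (P.act.flip 1) ∘ₗ (τ ^ (j + 1) : A ≃ₐ[k] A).toLinearMap
            = ((P.act.flip 1) ∘ₗ (τ ^ j : A ≃ₐ[k] A).toLinearMap) ∘ₗ τ.toLinearMap :=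
          LinearMap.ext fun c => by simp [hpow j c]
        rw [s3, ← E1, ih (τ a) b r, E2]
        have s4 : (P.act.flip 1) ∘ₗ ((LinearMap.mulLeft k ((gu⁻¹ : Aˣ) : A)).comp
              (LinearMap.mulRight k (gu : A))) = P.act.flip 1 :=
          LinearMap.ext fun c => by
            simp only [LinearMap.comp_apply, LinearMap.mulLeft_apply, LinearMap.mulRight_apply,
              LinearMap.flip_apply]
            rw [← mul_assoc]
            exact hconj c 1
        have s5 : ((P.act.flip r).comp
              ((LinearMap.mulRight k b).comp
                ((LinearMap.mulLeft k ((gu ^ kz : Aˣ) : A)).comp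
                  (τ ^ j : A ≃ₐ[k] A).toLinearMap))) ∘ₗ τ.toLinearMap
            = (P.act.flip r).comp
              ((LinearMap.mulRight k b).comp
                ((LinearMap.mulLeft k ((gu ^ kz : Aˣ) : A)).comp
                  (τ ^ (j + 1) : A ≃ₐ[k] A).toLinearMap)) :=
          LinearMap.ext fun c => by simp [hpow j c]
        rw [s4, s5]
    rw [pairF_def, pairF_def, flipwj j, pairF_mulr_left _ _ _ (hwj j), pairF_mulr_right,
      Q j a b r]
  · -- part (iii)
    intro hcomm hsym a b r j kz
    have hggi : (gu : A) * ((gu⁻¹ : Aˣ) : A) = 1 := Units.mul_inv gu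
    have hgig : ((gu⁻¹ : Aˣ) : A) * (gu : A) = 1 := Units.inv_mul gu
    have hconj : ∀ (x : A) (r' : R),
        P.act (((gu⁻¹ : Aˣ) : A) * x * (gu : A)) r' = P.act x r' := by
      intro x r'
      have h := hcomm (((gu⁻¹ : Aˣ) : A) * x) r'
      rw [← mul_assoc, hggi, one_mul] at h
      exact h.symm
    have hgi : ∀ (x : A) (r' : R),
        P.act (((gu⁻¹ : Aˣ) : A) * x) r' = P.act (x * ((gu⁻¹ : Aˣ) : A)) r' := by
      intro x r'
      have h := hcomm (((gu⁻¹ : Aˣ) : A) * x * ((gu⁻¹ : Aˣ) : A)) r'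
      rw [show (gu : A) * (((gu⁻¹ : Aˣ) : A) * x * ((gu⁻¹ : Aˣ) : A))
            = x * ((gu⁻¹ : Aˣ) : A) by rw [← mul_assoc, ← mul_assoc, hggi, one_mul],
          show ((gu⁻¹ : Aˣ) : A) * x * ((gu⁻¹ : Aˣ) : A) * (gu : A)
            = ((gu⁻¹ : Aˣ) : A) * x by rw [mul_assoc, hgig, mul_one]] at h
      exact h.symm
    have hzall : ∀ (m : ℤ) (x : A) (r' : R),
        P.act (((gu ^ m : Aˣ) : A) * x) r' = P.act (x * ((gu ^ m : Aˣ) : A)) r' := by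
      intro m
      induction m using Int.induction_on with
      | zero => intro x r'; simp
      | succ n ih =>
        intro x r'
        have hz1 : ((gu ^ ((n : ℤ) + 1) : Aˣ) : A)
            = ((gu ^ (n : ℤ) : Aˣ) : A) * (gu : A) := by
          rw [zpow_add_one]; rfl
        rw [hz1, mul_assoc, ih ((gu : A) * x) r', mul_assoc, hcomm (x * ((gu ^ (n:ℤ) : Aˣ) : A)) r',
          mul_assoc]
      | pred n ih =>
        intro x r'
        have hz1 : ((gu ^ (-(n : ℤ) - 1) : Aˣ) : A)
            = ((gu ^ (-(n : ℤ)) : Aˣ) : A) * ((gu⁻¹ : Aˣ) : A) := by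
          rw [zpow_sub_one]; rfl
        rw [hz1, mul_assoc, ih (((gu⁻¹ : Aˣ) : A) * x) r', mul_assoc,
          hgi (x * ((gu ^ (-(n:ℤ)) : Aˣ) : A)) r', mul_assoc]
    -- key comul-rewriting step for the second slot
    have EKEY : ∀ (j : ℕ) (m' a : A) (r : R),
        pairF ((P.act.flip r).comp (LinearMap.mulRight k m'))
            ((P.act.flip 1) ∘ₗ (τ ^ j : A ≃ₐ[k] A).toLinearMap) (τ a)
          = pairF ((P.act.flip r).comp
              (LinearMap.mulRight k ((gu : A) * m' * ((gu⁻¹ : Aˣ) : A))))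
            ((P.act.flip 1) ∘ₗ (τ ^ (j + 1) : A ≃ₐ[k] A).toLinearMap) a := by
      intro j m' a r
      rw [E2]
      have s1 : ((P.act.flip r).comp (LinearMap.mulRight k m')) ∘ₗ
            ((LinearMap.mulLeft k ((gu⁻¹ : Aˣ) : A)).comp (LinearMap.mulRight k (gu : A)))
          = (P.act.flip r).comp
              (LinearMap.mulRight k ((gu : A) * m' * ((gu⁻¹ : Aˣ) : A))) :=
        LinearMap.ext fun c => by
          simp only [LinearMap.comp_apply, LinearMap.mulLeft_apply, LinearMap.mulRight_apply,
            LinearMap.flip_apply]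
          rw [mul_assoc ((gu⁻¹ : Aˣ) : A) (c * (gu : A)) m', hgi ((c * (gu : A)) * m') r,
            mul_assoc c (gu : A) m', mul_assoc c ((gu : A) * m') ((gu⁻¹ : Aˣ) : A)]
      have s2 : ((P.act.flip 1) ∘ₗ (τ ^ j : A ≃ₐ[k] A).toLinearMap) ∘ₗ τ.toLinearMap
          = (P.act.flip 1) ∘ₗ (τ ^ (j + 1) : A ≃ₐ[k] A).toLinearMap :=
        LinearMap.ext fun c => by simp [hpow j c]
      rw [s1, s2]
    have P' : ∀ (j : ℕ) (m a : A) (r : R),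
        pairF ((P.act.flip r).comp
              (LinearMap.mulRight k (((gu⁻¹ : Aˣ) : A) * m * (gu : A))))
            ((P.act.flip 1) ∘ₗ (τ ^ j : A ≃ₐ[k] A).toLinearMap) a
          = pairF ((P.act.flip r).comp (LinearMap.mulRight k m))
            ((P.act.flip 1) ∘ₗ (τ ^ j : A ≃ₐ[k] A).toLinearMap) a := by
      intro j
      induction j with
      | zero =>
        intro m a r
        have s1 : (P.act.flip 1) ∘ₗ (τ ^ 0 : A ≃ₐ[k] A).toLinearMap = P.act.flip 1 :=
          LinearMap.ext fun c => by simp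
        have t1 : pairF ((P.act.flip r).comp
              (LinearMap.mulRight k (((gu⁻¹ : Aˣ) : A) * m * (gu : A)))) (P.act.flip 1) a
            = P.act a (P.act (((gu⁻¹ : Aˣ) : A) * m * (gu : A)) r) :=
          (hsym a (((gu⁻¹ : Aˣ) : A) * m * (gu : A)) r).symm
        have t2 : pairF ((P.act.flip r).comp (LinearMap.mulRight k m)) (P.act.flip 1) a
            = P.act a (P.act m r) := (hsym a m r).symm
        rw [s1, t1, t2, hconj m r]
      | succ j ih =>
        intro m a r
        have e1 : (gu : A) * (((gu⁻¹ : Aˣ) : A) * (((gu⁻¹ : Aˣ) : A) * m * (gu : A)) * (gu : A))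
            * ((gu⁻¹ : Aˣ) : A) = ((gu⁻¹ : Aˣ) : A) * m * (gu : A) := by
          rw [← mul_assoc, ← mul_assoc, hggi, one_mul, mul_assoc _ (gu:A) _, hggi, mul_one]
        have e2 : (gu : A) * (((gu⁻¹ : Aˣ) : A) * m * (gu : A)) * ((gu⁻¹ : Aˣ) : A) = m := by
          rw [← mul_assoc, ← mul_assoc, hggi, one_mul, mul_assoc, hggi, mul_one]
        have k1 := EKEY j (((gu⁻¹ : Aˣ) : A) * (((gu⁻¹ : Aˣ) : A) * m * (gu : A)) * (gu : A)) a r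
        rw [e1] at k1
        have k2 := EKEY j (((gu⁻¹ : Aˣ) : A) * m * (gu : A)) a r
        rw [e2] at k2
        rw [← k1, ih (((gu⁻¹ : Aˣ) : A) * m * (gu : A)) (τ a) r, k2]
    have S : ∀ (j : ℕ) (a b : A) (r : R),
        pairF ((P.act.flip r).comp (LinearMap.mulRight k (((gu ^ kz : Aˣ) : A) * b)))
            ((P.act.flip 1) ∘ₗ (τ ^ j : A ≃ₐ[k] A).toLinearMap) a
          = pairF ((P.act.flip r).comp
              ((LinearMap.mulRight k b).comp
                ((LinearMap.mulLeft k ((gu ^ kz : Aˣ) : A)).comp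
                  (τ ^ j : A ≃ₐ[k] A).toLinearMap)))
            (P.act.flip 1) a := by
      intro j
      induction j with
      | zero =>
        intro a b r
        have s1 : (P.act.flip 1) ∘ₗ (τ ^ 0 : A ≃ₐ[k] A).toLinearMap = P.act.flip 1 :=
          LinearMap.ext fun c => by simp
        have s2 : (P.act.flip r).comp
              ((LinearMap.mulRight k b).comp
                ((LinearMap.mulLeft k ((gu ^ kz : Aˣ) : A)).comp
                  (τ ^ 0 : A ≃ₐ[k] A).toLinearMap))
            = (P.act.flip r).comp (LinearMap.mulRight k (b * ((gu ^ kz : Aˣ) : A))) :=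
          LinearMap.ext fun c => by
            have h0 : (τ ^ 0 : A ≃ₐ[k] A).toLinearMap c = c := by
              rw [pow_zero]; rfl
            simp only [LinearMap.comp_apply, LinearMap.mulLeft_apply, LinearMap.mulRight_apply,
              LinearMap.flip_apply, h0]
            rw [mul_assoc, hzall kz (c * b), ← mul_assoc, mul_assoc]
        have t1 : pairF ((P.act.flip r).comp
              (LinearMap.mulRight k (((gu ^ kz : Aˣ) : A) * b))) (P.act.flip 1) a
            = P.act a (P.act (((gu ^ kz : Aˣ) : A) * b) r) :=
          (hsym a (((gu ^ kz : Aˣ) : A) * b) r).symm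
        have t2 : pairF ((P.act.flip r).comp
              (LinearMap.mulRight k (b * ((gu ^ kz : Aˣ) : A)))) (P.act.flip 1) a
            = P.act a (P.act (b * ((gu ^ kz : Aˣ) : A)) r) :=
          (hsym a (b * ((gu ^ kz : Aˣ) : A)) r).symm
        rw [s1, s2, t1, t2, hzall kz b r]
      | succ j ih =>
        intro a b r
        have e1 : (gu : A) * (((gu⁻¹ : Aˣ) : A) * (((gu ^ kz : Aˣ) : A) * b) * (gu : A))
            * ((gu⁻¹ : Aˣ) : A) = ((gu ^ kz : Aˣ) : A) * b := by
          rw [← mul_assoc, ← mul_assoc, hggi, one_mul, mul_assoc _ (gu:A) _, hggi, mul_one]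
        have k1 := EKEY j (((gu⁻¹ : Aˣ) : A) * (((gu ^ kz : Aˣ) : A) * b) * (gu : A)) a r
        rw [e1] at k1
        rw [← k1, P' j (((gu ^ kz : Aˣ) : A) * b) (τ a) r, ih (τ a) b r, E1]
        have hs : ((P.act.flip r).comp
              ((LinearMap.mulRight k b).comp
                ((LinearMap.mulLeft k ((gu ^ kz : Aˣ) : A)).comp
                  (τ ^ j : A ≃ₐ[k] A).toLinearMap))) ∘ₗ τ.toLinearMap
            = (P.act.flip r).comp
              ((LinearMap.mulRight k b).comp
                ((LinearMap.mulLeft k ((gu ^ kz : Aˣ) : A)).comp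
                  (τ ^ (j + 1) : A ≃ₐ[k] A).toLinearMap)) :=
          LinearMap.ext fun c => by simp [hpow j c]
        rw [hs]
    rw [pairF_def, pairF_def, flipwj j, pairF_mulr_right, pairF_mulr_right, S j a b r]
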